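/- If F is a Banach lattice with a strong unit, then un-convergence in F agrees with norm convergence; consequently, a continuous operator T : E → F between Banach lattices is u-M-weakly compact if and only if it is M-weakly compact. -/

import Mathlib

open Filter

/-- A sequence in a normed lattice is unbounded norm (un-) convergent to `0`. -/
def UnNullSeq {F : Type*} [NormedAddCommGroup F] [Lattice F] [HasSolidNorm F] [IsOrderedAddMonoid F] (y : ℕ → F) : Prop :=
  ∀ w : F, 0 ≤ w → Tendsto (fun n => ‖|y n| ⊓ w‖) atTop (nhds 0)

section aux
variable {F : Type*} [NormedAddCommGroup F] [Lattice F] [HasSolidNorm F] [IsOrderedAddMonoid F] [NormedSpace ℝ F]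

private lemma nsmul_pow_two_semiclosed' {a : F} (k : ℕ) (h : 0 ≤ (2^k) • a) : 0 ≤ a := by
  induction k generalizing a with
  | zero => simpa using h
  | succ n ih =>
      apply nsmul_two_semiclosed
      apply ih
      rw [← mul_nsmul', ← pow_succ]
      exact h

private lemma real_smul_nonneg' {c : ℝ} (hc : 0 ≤ c) {v : F} (hv : 0 ≤ v) : 0 ≤ c • v := by
  have dyadic : ∀ (m k : ℕ), 0 ≤ ((m : ℝ) / 2 ^ k) • v := by
    intro m k
    apply nsmul_pow_two_semiclosed' k
    rw [← Nat.cast_smul_eq_nsmul ℝ, smul_smul]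
    rw [show ((2^k : ℕ) : ℝ) * ((m : ℝ) / 2 ^ k) = (m:ℝ) by push_cast; field_simp]
    rw [Nat.cast_smul_eq_nsmul]
    exact nsmul_nonneg hv m
  set q : ℕ → ℝ := fun n => (⌈c * 2 ^ n⌉₊ : ℝ) / 2 ^ n with hq
  have hql : ∀ n, c ≤ q n := by
    intro n
    rw [hq, le_div_iff₀ (by positivity)]
    exact Nat.le_ceil _
  have hqu : ∀ n, q n ≤ c + (1/2) ^ n := by
    intro n
    rw [hq, div_le_iff₀ (by positivity)]
    have h1 := (Nat.ceil_lt_add_one (by positivity : (0:ℝ) ≤ c * 2 ^ n)).le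
    calc (⌈c * 2 ^ n⌉₊ : ℝ) ≤ c * 2 ^ n + 1 := h1
      _ = (c + (1/2)^n) * 2 ^ n := by
          rw [add_mul, one_div, inv_pow, inv_mul_cancel₀ (by positivity)]
  have hqt : Tendsto q atTop (nhds c) := by
    apply tendsto_of_tendsto_of_tendsto_of_le_of_le (g := fun _ => c)
      (h := fun n => c + (1/2)^n) tendsto_const_nhds _ hql hqu
    simpa using tendsto_const_nhds.add (tendsto_pow_atTop_nhds_zero_of_lt_one (by norm_num) (by norm_num) : Tendsto (fun n : ℕ => (1/2:ℝ)^n) atTop (nhds 0))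
  exact ge_of_tendsto (hqt.smul_const v) (Eventually.of_forall fun n => dyadic _ _)

private lemma real_smul_mono' {c : ℝ} (hc : 0 ≤ c) {a b : F} (hab : a ≤ b) : c • a ≤ c • b := by
  have := real_smul_nonneg' hc (sub_nonneg.2 hab)
  rwa [smul_sub, sub_nonneg] at this

private lemma real_smul_sup' {c : ℝ} (hc : 0 < c) (a b : F) : c • (a ⊔ b) = (c • a) ⊔ (c • b) := by
  apply le_antisymm
  · have ha : a ≤ c⁻¹ • ((c • a) ⊔ (c • b)) := by
      have := real_smul_mono' (le_of_lt (inv_pos.2 hc)) (le_sup_left : c • a ≤ (c • a) ⊔ (c • b))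
      rwa [inv_smul_smul₀ hc.ne'] at this
    have hb : b ≤ c⁻¹ • ((c • a) ⊔ (c • b)) := by
      have := real_smul_mono' (le_of_lt (inv_pos.2 hc)) (le_sup_right : c • b ≤ (c • a) ⊔ (c • b))
      rwa [inv_smul_smul₀ hc.ne'] at this
    have := real_smul_mono' hc.le (sup_le ha hb)
    rwa [smul_inv_smul₀ hc.ne'] at this
  · exact sup_le (real_smul_mono' hc.le le_sup_left) (real_smul_mono' hc.le le_sup_right)

private lemma real_smul_inf' {c : ℝ} (hc : 0 < c) (a b : F) : c • (a ⊓ b) = (c • a) ⊓ (c • b) := by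
  apply le_antisymm
  · exact le_inf (real_smul_mono' hc.le inf_le_left) (real_smul_mono' hc.le inf_le_right)
  · have ha : c⁻¹ • ((c • a) ⊓ (c • b)) ≤ a := by
      have := real_smul_mono' (le_of_lt (inv_pos.2 hc)) (inf_le_left : (c • a) ⊓ (c • b) ≤ c • a)
      rwa [inv_smul_smul₀ hc.ne'] at this
    have hb : c⁻¹ • ((c • a) ⊓ (c • b)) ≤ b := by
      have := real_smul_mono' (le_of_lt (inv_pos.2 hc)) (inf_le_right : (c • a) ⊓ (c • b) ≤ c • b)
      rwa [inv_smul_smul₀ hc.ne'] at this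
    have := real_smul_mono' hc.le (le_inf ha hb)
    rwa [smul_inv_smul₀ hc.ne'] at this

private lemma real_smul_abs' {c : ℝ} (hc : 0 < c) (a : F) : |c • a| = c • |a| := by
  rw [abs, abs, real_smul_sup' hc, smul_neg]
end aux

section baire
variable {F : Type*} [NormedAddCommGroup F] [Lattice F] [HasSolidNorm F] [IsOrderedAddMonoid F] [NormedSpace ℝ F] [CompleteSpace F]

private lemma exists_unit_bound' (e : F) (he : 0 ≤ e)
    (hunit : ∀ x : F, ∃ l : ℝ, 0 < l ∧ |x| ≤ l • e) :
    ∃ K : ℝ, 0 < K ∧ ∀ x : F, |x| ≤ (K * ‖x‖) • e := by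
  set A : ℕ → Set F := fun k => {x | |x| ≤ (k : ℝ) • e} with hA
  have habs : Continuous fun x : F => |x| := continuous_id.sup continuous_neg
  have hclosed : ∀ k, IsClosed (A k) := fun k => isClosed_le habs continuous_const
  have hcover : (⋃ k, A k) = Set.univ := by
    ext x
    simp only [Set.mem_iUnion, Set.mem_univ, iff_true]
    obtain ⟨l, hl, hle⟩ := hunit x
    refine ⟨⌈l⌉₊, hle.trans ?_⟩
    rw [← sub_nonneg, ← sub_smul]
    exact real_smul_nonneg' (by simpa using Nat.le_ceil l) he
  obtain ⟨k, x0, hx0⟩ := nonempty_interior_of_iUnion_of_closed hclosed hcover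
  obtain ⟨r, hr, hball⟩ := Metric.mem_nhds_iff.1 (mem_interior_iff_mem_nhds.1 hx0)
  have hballA : Metric.ball x0 r ⊆ A k := hball
  have hx0A : x0 ∈ A k := hballA (Metric.mem_ball_self hr)
  set c : ℝ := 2 * (k : ℝ) + 1 with hc
  have hcpos : 0 < c := by positivity
  have hsmall : ∀ z : F, ‖z‖ < r → |z| ≤ c • e := by
    intro z hz
    have hmem : x0 + z ∈ A k := by
      apply hballA
      simp [Metric.mem_ball, dist_eq_norm, hz]
    have h1 : |z| ≤ |x0 + z| + |x0| := by
      have tri : ∀ a b : F, |a + b| ≤ |a| + |b| := by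
        intro a b
        refine abs_le'.2 ⟨add_le_add (le_abs_self _) (le_abs_self _), ?_⟩
        rw [neg_add]
        exact add_le_add (neg_le_abs _) (neg_le_abs _)
      have hz' : |z| = |(x0 + z) + (-x0)| := by
        congr 1; abel
      rw [hz']
      exact (tri _ _).trans (by rw [abs_neg])
    calc |z| ≤ |x0 + z| + |x0| := h1
      _ ≤ (k : ℝ) • e + (k : ℝ) • e := add_le_add hmem hx0A
      _ = (2 * (k:ℝ)) • e := by rw [← add_smul]; ring_nf
      _ ≤ c • e := by
          rw [← sub_nonneg, ← sub_smul]
          exact real_smul_nonneg' (by rw [hc]; norm_num) he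
  refine ⟨2 * c / r, by positivity, fun x => ?_⟩
  rcases eq_or_ne x 0 with rfl | hx
  · simpa using real_smul_nonneg' (by positivity) he
  · have hxn : 0 < ‖x‖ := norm_pos_iff.2 hx
    set t : ℝ := r / (2 * ‖x‖) with ht
    have htpos : 0 < t := by positivity
    have hnz : ‖t • x‖ < r := by
      have h2 : t * ‖x‖ = r / 2 := by
        rw [ht]; field_simp
      rw [norm_smul, Real.norm_eq_abs, abs_of_pos htpos, h2]
      linarith
    have hb := hsmall _ hnz
    rw [real_smul_abs' htpos] at hb
    have := real_smul_mono' (le_of_lt (inv_pos.2 htpos)) hb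
    rw [inv_smul_smul₀ htpos.ne', smul_smul] at this
    convert this using 2
    rw [ht]
    field_simp
end baire

private lemma un_iff_norm_of_strongUnit
    {F : Type*} [NormedAddCommGroup F] [Lattice F] [HasSolidNorm F] [IsOrderedAddMonoid F] [NormedSpace ℝ F] [CompleteSpace F]
    (e : F) (he : 0 ≤ e) (hunit : ∀ x : F, ∃ l : ℝ, 0 < l ∧ |x| ≤ l • e)
    (y : ℕ → F) :
    (∀ w : F, 0 ≤ w → Tendsto (fun n => ‖|y n| ⊓ w‖) atTop (nhds 0)) ↔
      Tendsto (fun n => ‖y n‖) atTop (nhds 0) := by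
  obtain ⟨K, hK, hKb⟩ := exists_unit_bound' e he hunit
  constructor
  · intro hun
    have ha := hun e he
    have key : ∀ n, ‖|y n| ⊓ e‖ ≤ 1/(2*K) → ‖y n‖ ≤ ‖|y n| ⊓ e‖ := by
      intro n hn
      set L : ℝ := max (K * ‖y n‖) 1 with hL
      have hL1 : (1:ℝ) ≤ L := le_max_right _ _
      have hLpos : 0 < L := lt_of_lt_of_le one_pos hL1
      have hyb : |y n| ≤ L • e := by
        refine (hKb (y n)).trans ?_
        rw [← sub_nonneg, ← sub_smul]
        exact real_smul_nonneg' (by simp [hL, sub_nonneg]) he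
      have h2 : |y n| ≤ L • (|y n| ⊓ e) := by
        have h1 : |y n| = |y n| ⊓ (L • e) := (inf_eq_left.2 hyb).symm
        have habs : |y n| ≤ L • |y n| := by
          have := real_smul_nonneg' (sub_nonneg.2 hL1) (abs_nonneg (y n))
          rw [sub_smul, one_smul, sub_nonneg] at this
          exact this
        calc |y n| = |y n| ⊓ (L • e) := h1
          _ ≤ (L • |y n|) ⊓ (L • e) := inf_le_inf_right _ habs
          _ = L • (|y n| ⊓ e) := (real_smul_inf' hLpos _ _).symm
      have hinf0 : (0:F) ≤ |y n| ⊓ e := le_inf (abs_nonneg _) he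
      have h3 : ‖y n‖ ≤ L * ‖|y n| ⊓ e‖ := by
        calc ‖y n‖ = ‖|y n|‖ := (norm_abs_eq_norm _).symm
          _ ≤ ‖L • (|y n| ⊓ e)‖ := by
              apply norm_le_norm_of_abs_le_abs
              rw [abs_of_nonneg (abs_nonneg (y n)),
                abs_of_nonneg (real_smul_nonneg' hLpos.le hinf0)]
              exact h2
          _ = L * ‖|y n| ⊓ e‖ := by
              rw [norm_smul, Real.norm_eq_abs, abs_of_pos hLpos]
      rcases le_or_gt (K * ‖y n‖) 1 with hc1 | hc1
      · rw [hL, max_eq_right hc1, one_mul] at h3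
        exact h3
      · rw [hL, max_eq_left hc1.le] at h3
        have hpos : (0:ℝ) ≤ K * ‖y n‖ := le_of_lt (lt_trans one_pos hc1)
        have hmul := mul_le_mul_of_nonneg_left hn hpos
        have hhalf : K * ‖y n‖ * (1/(2*K)) = ‖y n‖/2 := by field_simp
        rw [hhalf] at hmul
        have := norm_nonneg (|y n| ⊓ e)
        linarith
    have hev : ∀ᶠ n in atTop, ‖y n‖ ≤ ‖|y n| ⊓ e‖ := by
      filter_upwards [ha.eventually_lt_const (by positivity : (0:ℝ) < 1/(2*K))] with n hn
      exact key n hn.le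
    exact squeeze_zero' (Eventually.of_forall fun n => norm_nonneg _) hev ha
  · intro hnorm w hw
    refine squeeze_zero (fun n => norm_nonneg _) (fun n => ?_) hnorm
    calc ‖|y n| ⊓ w‖ ≤ ‖|y n|‖ := by
          apply norm_le_norm_of_abs_le_abs
          rw [abs_of_nonneg (le_inf (abs_nonneg _) hw), abs_of_nonneg (abs_nonneg (y n))]
          exact inf_le_left
      _ = ‖y n‖ := norm_abs_eq_norm _


/-- if `F` has a strong unit, then un-convergence agrees with norm
convergence, and hence `T : E → F` is u-M-weakly compact iff it is M-weakly
compact. -/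
theorem uMWeaklyCompact_iff_mWeaklyCompact_of_strongUnit
    {E F : Type*} [NormedAddCommGroup E] [Lattice E] [HasSolidNorm E] [IsOrderedAddMonoid E] [NormedSpace ℝ E] [CompleteSpace E]
    [NormedAddCommGroup F] [Lattice F] [HasSolidNorm F] [IsOrderedAddMonoid F] [NormedSpace ℝ F] [CompleteSpace F]
    (e : F) (he : 0 ≤ e) (hunit : ∀ x : F, ∃ l : ℝ, 0 < l ∧ |x| ≤ l • e)
    (T : E →L[ℝ] F) :
    (∀ y : ℕ → F, (UnNullSeq y ↔ Tendsto (fun n => ‖y n‖) atTop (nhds 0))) ∧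
    ((∀ x : ℕ → E, (∃ C, ∀ n, ‖x n‖ ≤ C) →
        (∀ n m, n ≠ m → |x n| ⊓ |x m| = 0) →
        UnNullSeq (fun n => T (x n))) ↔
      (∀ x : ℕ → E, (∃ C, ∀ n, ‖x n‖ ≤ C) →
        (∀ n m, n ≠ m → |x n| ⊓ |x m| = 0) →
        Tendsto (fun n => ‖T (x n)‖) atTop (nhds 0))) := by
  have main : ∀ y : ℕ → F, UnNullSeq y ↔ Tendsto (fun n => ‖y n‖) atTop (nhds 0) :=
    fun y => un_iff_norm_of_strongUnit e he hunit y
  refine ⟨main, ?_⟩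
  constructor
  · intro h x hb hd
    exact (main _).1 (h x hb hd)
  · intro h x hb hd
    exact (main _).2 (h x hb hd)
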